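/- Let {Y_k}, {Z_k}, {W_k} be sequences of nonnegative random variables adapted to a filtration {F_k}, with E[Y_{k+1} | F_k] ≤ Y_k - Z_k + W_k for all k and ∑_{k=0}^∞ W_k < ∞ almost surely. Then ∑_{k=0}^∞ Z_k < ∞ almost surely and {Y_k} converges almost surely to a nonnegative random variable. -/

import Mathlib

open MeasureTheory Filter
open scoped ENNReal NNReal

namespace RS

variable {Ω : Type*}

/-- partial sums -/
noncomputable def psum (W : ℕ → Ω → ℝ) (k : ℕ) (ω : Ω) : ℝ :=
  ∑ j ∈ Finset.range k, W j ω

/-- the natural supermartingale -/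
noncomputable def SS (Y Z W : ℕ → Ω → ℝ) (k : ℕ) (ω : Ω) : ℝ :=
  Y k ω + psum Z k ω - psum W k ω

open Classical in
/-- stopped supermartingale -/
noncomputable def MM (Y Z W : ℕ → Ω → ℝ) (a : ℝ) : ℕ → Ω → ℝ
  | 0 => fun ω => SS Y Z W 0 ω
  | k + 1 => fun ω => if psum W (k + 1) ω ≤ a then SS Y Z W (k + 1) ω else MM Y Z W a k ω

open Classical in
/-- stopped partial sums of Z -/
noncomputable def QQ (Z W : ℕ → Ω → ℝ) (a : ℝ) : ℕ → Ω → ℝ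
  | 0 => fun _ => 0
  | k + 1 => fun ω => if psum W (k + 1) ω ≤ a then psum Z (k + 1) ω else QQ Z W a k ω

variable {Y Z W : ℕ → Ω → ℝ} {a : ℝ} {ω : Ω}

lemma psum_zero : psum W 0 ω = 0 := by simp [psum]

lemma psum_succ (k : ℕ) : psum W (k + 1) ω = psum W k ω + W k ω := by
  simp [psum, Finset.sum_range_succ]

lemma psum_nonneg (h : ∀ j, 0 ≤ W j ω) (k : ℕ) : 0 ≤ psum W k ω :=
  Finset.sum_nonneg fun j _ => h j

lemma psum_mono (h : ∀ j, 0 ≤ W j ω) {k l : ℕ} (hkl : k ≤ l) :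
    psum W k ω ≤ psum W l ω := by
  unfold psum
  exact Finset.sum_le_sum_of_subset_of_nonneg (Finset.range_subset_range.2 hkl)
    (fun j _ _ => h j)

lemma MM_of_le (hW : ∀ j, 0 ≤ W j ω) (k : ℕ) (h : psum W (k + 1) ω ≤ a) :
    MM Y Z W a k ω = SS Y Z W k ω := by
  cases k with
  | zero => rfl
  | succ m =>
      have : psum W (m + 1) ω ≤ a := le_trans (psum_mono hW (by omega)) h
      simp [MM, this]

lemma QQ_of_le (hW : ∀ j, 0 ≤ W j ω) (k : ℕ) (h : psum W (k + 1) ω ≤ a) :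
    QQ Z W a k ω = psum Z k ω := by
  cases k with
  | zero => simp [QQ, psum_zero]
  | succ m =>
      have : psum W (m + 1) ω ≤ a := le_trans (psum_mono hW (by omega)) h
      simp [QQ, this]

lemma MM_succ_eq (hW : ∀ j, 0 ≤ W j ω) (k : ℕ) :
    MM Y Z W a (k + 1) ω = MM Y Z W a k ω +
      Set.indicator {ω' | psum W (k + 1) ω' ≤ a}
        (fun ω' => Y (k + 1) ω' - (Y k ω' - Z k ω' + W k ω')) ω := by
  by_cases h : psum W (k + 1) ω ≤ a
  · rw [Set.indicator_of_mem (show ω ∈ {ω' | psum W (k + 1) ω' ≤ a} from h)]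
    have h1 : MM Y Z W a (k + 1) ω = SS Y Z W (k + 1) ω := by simp [MM, h]
    rw [h1, MM_of_le hW k h]
    simp only [SS, psum_succ]
    ring
  · rw [Set.indicator_of_notMem (show ω ∉ {ω' | psum W (k + 1) ω' ≤ a} from h)]
    simp [MM, h]

lemma QQ_nonneg (hZ : ∀ j, 0 ≤ Z j ω) (k : ℕ) : 0 ≤ QQ Z W a k ω := by
  induction k with
  | zero => simp [QQ]
  | succ m ih =>
      by_cases h : psum W (m + 1) ω ≤ a
      · simpa [QQ, h] using psum_nonneg hZ (m + 1)
      · simpa [QQ, h] using ih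

lemma QQ_le_psum (hZ : ∀ j, 0 ≤ Z j ω) (k : ℕ) : QQ Z W a k ω ≤ psum Z k ω := by
  induction k with
  | zero => simp [QQ, psum_zero]
  | succ m ih =>
      by_cases h : psum W (m + 1) ω ≤ a
      · simp [QQ, h]
      · simp only [QQ, if_neg h]
        exact le_trans ih (psum_mono hZ (by omega))

lemma QQ_mono (hZ : ∀ j, 0 ≤ Z j ω) (k : ℕ) :
    QQ Z W a k ω ≤ QQ Z W a (k + 1) ω := by
  by_cases h : psum W (k + 1) ω ≤ a
  · simp only [QQ, if_pos h]
    exact le_trans (QQ_le_psum hZ k) (psum_mono hZ (by omega))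
  · simp [QQ, h]

lemma neg_le_MM (ha : 0 ≤ a) (hY : ∀ j, 0 ≤ Y j ω) (hZ : ∀ j, 0 ≤ Z j ω)
    (hW : ∀ j, 0 ≤ W j ω) (k : ℕ) : -a ≤ MM Y Z W a k ω := by
  induction k with
  | zero =>
      have : MM Y Z W a 0 ω = Y 0 ω := by simp [MM, SS, psum_zero]
      rw [this]; linarith [hY 0]
  | succ m ih =>
      by_cases h : psum W (m + 1) ω ≤ a
      · simp only [MM, if_pos h, SS]
        have := hY (m + 1); have := psum_nonneg hZ (m + 1); linarith
      · simpa [MM, h] using ih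

lemma QQ_le_MM_add (ha : 0 ≤ a) (hY : ∀ j, 0 ≤ Y j ω) (hZ : ∀ j, 0 ≤ Z j ω)
    (hW : ∀ j, 0 ≤ W j ω) (k : ℕ) :
    QQ Z W a k ω ≤ MM Y Z W a k ω + a := by
  induction k with
  | zero =>
      have : MM Y Z W a 0 ω = Y 0 ω := by simp [MM, SS, psum_zero]
      rw [this]; simp only [QQ]; linarith [hY 0]
  | succ m ih =>
      by_cases h : psum W (m + 1) ω ≤ a
      · simp only [QQ, MM, if_pos h, SS]
        have := hY (m + 1)
        linarith
      · simp only [QQ, MM, if_neg h]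
        exact ih

section Core

variable {m0 : MeasurableSpace Ω} {μ : Measure Ω} [IsProbabilityMeasure μ]
  {ℱ : Filtration ℕ m0}

lemma psum_sm (hW : Adapted ℱ W) {n k : ℕ} (h : k ≤ n + 1) :
    StronglyMeasurable[ℱ n] (psum W k) := by
  have : psum W k = fun ω => ∑ j ∈ Finset.range k, W j ω := rfl
  rw [this]
  refine Finset.stronglyMeasurable_fun_sum _ fun j hj => ?_
  exact ((hW j).mono (ℱ.mono (by simp only [Finset.mem_range] at hj; omega)) le_rfl).stronglyMeasurable

lemma SS_sm (hY : Adapted ℱ Y) (hZ : Adapted ℱ Z) (hW : Adapted ℱ W) (k : ℕ) :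
    StronglyMeasurable[ℱ k] (SS Y Z W k) :=
  ((hY k).stronglyMeasurable.add (psum_sm hZ (by omega))).sub (psum_sm hW (by omega))

lemma MM_adapted (hY : Adapted ℱ Y) (hZ : Adapted ℱ Z) (hW : Adapted ℱ W) :
    Adapted ℱ (MM Y Z W a) := by
  intro k
  induction k with
  | zero => exact (SS_sm hY hZ hW 0).measurable
  | succ m ih =>
      have hs : MeasurableSet[ℱ (m + 1)] {ω | psum W (m + 1) ω ≤ a} := by
        refine measurableSet_le ((psum_sm hW (n := m) le_rfl).mono (ℱ.mono m.le_succ)).measurable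
          measurable_const
      exact (StronglyMeasurable.ite hs (SS_sm hY hZ hW (m + 1)) (ih.stronglyMeasurable.mono (ℱ.mono m.le_succ))).measurable

lemma MM_integrable (hW0 : ∀ j ω, 0 ≤ W j ω)
    (hYint : ∀ k, Integrable (Y k) μ) (hZint : ∀ k, Integrable (Z k) μ)
    (hWint : ∀ k, Integrable (W k) μ) (hWadp : Adapted ℱ W) (k : ℕ) :
    Integrable (MM Y Z W a k) μ := by
  induction k with
  | zero =>
      have : MM Y Z W a 0 = Y 0 := by funext ω; simp [MM, SS, psum]
      rw [this]; exact hYint 0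
  | succ m ih =>
      have heq : MM Y Z W a (m + 1) = MM Y Z W a m +
          Set.indicator {ω' | psum W (m + 1) ω' ≤ a}
            (fun ω' => Y (m + 1) ω' - (Y m ω' - Z m ω' + W m ω')) :=
        funext fun ω => MM_succ_eq (fun j => hW0 j ω) m
      rw [heq]
      have hs : MeasurableSet {ω | psum W (m + 1) ω ≤ a} :=
        ℱ.le m _ (measurableSet_le (psum_sm hWadp le_rfl).measurable measurable_const)
      exact ih.add (((hYint (m + 1)).sub (((hYint m).sub (hZint m)).add (hWint m))).indicator hs)

lemma MM_supermartingale (hY : Adapted ℱ Y) (hZ : Adapted ℱ Z) (hW : Adapted ℱ W)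
    (hYint : ∀ k, Integrable (Y k) μ) (hZint : ∀ k, Integrable (Z k) μ)
    (hWint : ∀ k, Integrable (W k) μ)
    (hW0 : ∀ j ω, 0 ≤ W j ω)
    (hcond : ∀ k, μ[Y (k + 1) | ℱ k] ≤ᵐ[μ] fun ω => Y k ω - Z k ω + W k ω) :
    Supermartingale (MM Y Z W a) ℱ μ := by
  refine supermartingale_nat (MM_adapted hY hZ hW).stronglyAdapted
    (MM_integrable hW0 hYint hZint hWint hW) fun k => ?_
  set s : Set Ω := {ω' | psum W (k + 1) ω' ≤ a} with hs_def
  have hs : MeasurableSet[ℱ k] s :=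
    measurableSet_le (psum_sm hW le_rfl).measurable measurable_const
  set f : Ω → ℝ := fun ω' => Y (k + 1) ω' - (Y k ω' - Z k ω' + W k ω') with hf_def
  set g : Ω → ℝ := fun ω' => Y k ω' - Z k ω' + W k ω' with hg_def
  have hgint : Integrable g μ := ((hYint k).sub (hZint k)).add (hWint k)
  have hfint : Integrable f μ := (hYint (k + 1)).sub hgint
  have heq : MM Y Z W a (k + 1) = MM Y Z W a k + s.indicator f :=
    funext fun ω => MM_succ_eq (fun j => hW0 j ω) k
  have hadd : μ[MM Y Z W a (k + 1)|ℱ k] =ᵐ[μ]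
      μ[MM Y Z W a k|ℱ k] + μ[s.indicator f|ℱ k] := by
    rw [heq]
    exact condExp_add (MM_integrable hW0 hYint hZint hWint hW k) (hfint.indicator (ℱ.le k _ hs)) _
  have h1 : μ[MM Y Z W a k|ℱ k] = MM Y Z W a k :=
    condExp_of_stronglyMeasurable (ℱ.le k) (MM_adapted hY hZ hW k).stronglyMeasurable
      (MM_integrable hW0 hYint hZint hWint hW k)
  have hind : μ[s.indicator f|ℱ k] =ᵐ[μ] s.indicator (μ[f|ℱ k]) :=
    condExp_indicator hfint hs
  have hcondf : μ[f|ℱ k] ≤ᵐ[μ] 0 := by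
    have h2 : μ[f|ℱ k] =ᵐ[μ] μ[Y (k + 1)|ℱ k] - μ[g|ℱ k] :=
      condExp_sub (hYint (k + 1)) hgint _
    have h3 : μ[g|ℱ k] = g :=
      condExp_of_stronglyMeasurable (ℱ.le k) (((hY k).sub (hZ k)).add (hW k)).stronglyMeasurable hgint
    filter_upwards [h2, hcond k] with ω h2ω hcω
    rw [Pi.zero_apply, h2ω, Pi.sub_apply, h3]
    exact sub_nonpos.2 hcω
  filter_upwards [hadd, hind, hcondf] with ω hA hI hF
  rw [Pi.zero_apply] at hF
  rw [hA, Pi.add_apply, h1, hI]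
  by_cases hω : ω ∈ s
  · rw [Set.indicator_of_mem hω]
    linarith
  · rw [Set.indicator_of_notMem hω]
    simp

lemma ae_good (ha : 0 ≤ a)
    (hY : Adapted ℱ Y) (hZ : Adapted ℱ Z) (hW : Adapted ℱ W)
    (hYint : ∀ k, Integrable (Y k) μ) (hZint : ∀ k, Integrable (Z k) μ)
    (hWint : ∀ k, Integrable (W k) μ)
    (hY0 : ∀ j ω, 0 ≤ Y j ω) (hZ0 : ∀ j ω, 0 ≤ Z j ω) (hW0 : ∀ j ω, 0 ≤ W j ω)
    (hcond : ∀ k, μ[Y (k + 1) | ℱ k] ≤ᵐ[μ] fun ω => Y k ω - Z k ω + W k ω)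
    (hWsum : ∀ᵐ ω ∂μ, Summable fun k => W k ω) :
    ∀ᵐ ω ∂μ, (∀ k, psum W (k + 1) ω ≤ a) →
      (Summable fun k => Z k ω) ∧
        ∃ y : ℝ, 0 ≤ y ∧ Tendsto (fun k => Y k ω) atTop (nhds y) := by
  have hsup := MM_supermartingale (a := a) hY hZ hW hYint hZint hWint hW0 hcond
  have hMMint := MM_integrable (μ := μ) (a := a) hW0 hYint hZint hWint hW
  have hEbound : ∀ k, ∫ ω, MM Y Z W a k ω ∂μ ≤ ∫ ω, Y 0 ω ∂μ := by
    intro k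
    have h0 : MM Y Z W a 0 = Y 0 := by funext ω; simp [MM, SS, psum]
    have h := hsup.setIntegral_le (Nat.zero_le k) (MeasurableSet.univ)
    simpa [setIntegral_univ, h0] using h
  -- L1 bound
  have hbdd : ∀ k, eLpNorm ((-(MM Y Z W a)) k) 1 μ ≤
      (((∫ ω, Y 0 ω ∂μ) + 2 * a).toNNReal : ℝ≥0∞) := by
    intro k
    have hnorm : eLpNorm (MM Y Z W a k) 1 μ
        = ENNReal.ofReal (∫ ω, ‖MM Y Z W a k ω‖ ∂μ) := by
      rw [eLpNorm_one_eq_lintegral_enorm, ← ofReal_integral_norm_eq_lintegral_enorm (hMMint k)]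
    have hptw : ∀ ω, ‖MM Y Z W a k ω‖ ≤ MM Y Z W a k ω + 2 * a := by
      intro ω
      have hlow := neg_le_MM ha (fun j => hY0 j ω) (fun j => hZ0 j ω) (fun j => hW0 j ω) k
      rw [Real.norm_eq_abs]
      exact abs_le.2 ⟨by linarith, by linarith⟩
    have hint2 : ∫ ω, ‖MM Y Z W a k ω‖ ∂μ ≤ (∫ ω, Y 0 ω ∂μ) + 2 * a := by
      calc ∫ ω, ‖MM Y Z W a k ω‖ ∂μ ≤ ∫ ω, (MM Y Z W a k ω + 2 * a) ∂μ :=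
            integral_mono (hMMint k).norm ((hMMint k).add (integrable_const _)) hptw
        _ = (∫ ω, MM Y Z W a k ω ∂μ) + 2 * a := by
            rw [integral_add (hMMint k) (integrable_const _), integral_const]
            simp
        _ ≤ _ := by linarith [hEbound k]
    show eLpNorm (-(MM Y Z W a k)) 1 μ ≤ _
    rw [eLpNorm_neg, hnorm]
    exact le_trans (ENNReal.ofReal_le_ofReal hint2) (le_of_eq rfl)
  have htend := hsup.neg.exists_ae_tendsto_of_bdd hbdd
  -- lintegral bound for QQ
  have hps : ∀ l n, l ≤ n + 1 → Measurable (psum (W := W) l) := by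
    intro l n h
    exact ((psum_sm hW h).measurable).mono (ℱ.le n) le_rfl
  have hQmeas : ∀ k, Measurable (QQ Z W a k) := by
    intro k
    induction k with
    | zero =>
        have : QQ Z W a 0 = fun _ : Ω => (0 : ℝ) := rfl
        rw [this]; exact measurable_const
    | succ m ih =>
        have : QQ Z W a (m + 1) = fun ω =>
            if psum W (m + 1) ω ≤ a then psum Z (m + 1) ω else QQ Z W a m ω := rfl
        rw [this]
        exact Measurable.ite (measurableSet_le (hps (m+1) m le_rfl) measurable_const)
          (((psum_sm hZ (le_rfl : m + 1 ≤ m + 1)).measurable).mono (ℱ.le m) le_rfl) ih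
  have hqmeas : Measurable fun ω => ⨆ k, ENNReal.ofReal (QQ Z W a k ω) :=
    Measurable.iSup fun k => ENNReal.measurable_ofReal.comp (hQmeas k)
  have hq : ∀ᵐ ω ∂μ, (⨆ k, ENNReal.ofReal (QQ Z W a k ω)) < ⊤ := by
    refine ae_lt_top hqmeas ?_
    have hswap : ∫⁻ ω, ⨆ k, ENNReal.ofReal (QQ Z W a k ω) ∂μ
        = ⨆ k, ∫⁻ ω, ENNReal.ofReal (QQ Z W a k ω) ∂μ :=
      lintegral_iSup (fun k => ENNReal.measurable_ofReal.comp (hQmeas k))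
        (fun i j hij ω => ENNReal.ofReal_le_ofReal
          ((monotone_nat_of_le_succ (fun k => QQ_mono (fun l => hZ0 l ω) k)) hij))
    rw [hswap]
    refine ne_of_lt (lt_of_le_of_lt (iSup_le fun k => ?_)
      (ENNReal.ofReal_lt_top (r := (∫ ω, Y 0 ω ∂μ) + a)))
    calc ∫⁻ ω, ENNReal.ofReal (QQ Z W a k ω) ∂μ
        ≤ ∫⁻ ω, ENNReal.ofReal (MM Y Z W a k ω + a) ∂μ :=
          lintegral_mono fun ω => ENNReal.ofReal_le_ofReal
            (QQ_le_MM_add ha (fun j => hY0 j ω) (fun j => hZ0 j ω) (fun j => hW0 j ω) k)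
      _ = ENNReal.ofReal (∫ ω, (MM Y Z W a k ω + a) ∂μ) :=
          (ofReal_integral_eq_lintegral_ofReal ((hMMint k).add (integrable_const _))
            (Filter.Eventually.of_forall fun ω => by
              simp only [Pi.zero_apply, Pi.add_apply]
              linarith [neg_le_MM (ω := ω) ha (fun j => hY0 j ω) (fun j => hZ0 j ω)
                (fun j => hW0 j ω) k])).symm
      _ ≤ ENNReal.ofReal ((∫ ω, Y 0 ω ∂μ) + a) := by
          refine ENNReal.ofReal_le_ofReal ?_
          rw [integral_add (hMMint k) (integrable_const _), integral_const]
          have := hEbound k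
          simp only [measure_univ, ENNReal.toReal_one, probReal_univ, smul_eq_mul, one_mul]
          linarith
  filter_upwards [htend, hq, hWsum] with ω hc hqω hsum hgood
  obtain ⟨c, hc⟩ := hc
  have hZpartial : ∀ k, ∑ j ∈ Finset.range k, Z j ω
      ≤ (⨆ k, ENNReal.ofReal (QQ Z W a k ω)).toReal := by
    intro k
    have h1 : ENNReal.ofReal (psum Z k ω) ≤ ⨆ k, ENNReal.ofReal (QQ Z W a k ω) := by
      rw [← QQ_of_le (fun j => hW0 j ω) k (hgood k)]
      exact le_iSup (fun k => ENNReal.ofReal (QQ Z W a k ω)) k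
    exact (ENNReal.ofReal_le_iff_le_toReal hqω.ne).1 h1
  have hZsum : Summable fun k => Z k ω :=
    summable_of_sum_range_le (fun n => hZ0 n ω) hZpartial
  refine ⟨hZsum, ?_⟩
  have hMMc : Tendsto (fun k => MM Y Z W a k ω) atTop (nhds (-c)) := by
    have h := hc.neg
    simp only [Pi.neg_apply, neg_neg] at h
    exact h
  have hYeq : ∀ k, Y k ω = MM Y Z W a k ω - psum Z k ω + psum W k ω := by
    intro k
    rw [MM_of_le (fun j => hW0 j ω) k (hgood k)]
    simp only [SS]; ring
  have hZt : Tendsto (fun k => psum Z k ω) atTop (nhds (∑' j, Z j ω)) :=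
    hZsum.hasSum.tendsto_sum_nat
  have hWt : Tendsto (fun k => psum W k ω) atTop (nhds (∑' j, W j ω)) :=
    hsum.hasSum.tendsto_sum_nat
  have hYt : Tendsto (fun k => Y k ω) atTop
      (nhds (-c - ∑' j, Z j ω + ∑' j, W j ω)) :=
    ((hMMc.sub hZt).add hWt).congr (fun k => (hYeq k).symm)
  exact ⟨_, ge_of_tendsto hYt (Filter.Eventually.of_forall fun k => hY0 k ω), hYt⟩

lemma core
    (hY : Adapted ℱ Y) (hZ : Adapted ℱ Z) (hW : Adapted ℱ W)
    (hYint : ∀ k, Integrable (Y k) μ) (hZint : ∀ k, Integrable (Z k) μ)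
    (hWint : ∀ k, Integrable (W k) μ)
    (hY0 : ∀ j ω, 0 ≤ Y j ω) (hZ0 : ∀ j ω, 0 ≤ Z j ω) (hW0 : ∀ j ω, 0 ≤ W j ω)
    (hcond : ∀ k, μ[Y (k + 1) | ℱ k] ≤ᵐ[μ] fun ω => Y k ω - Z k ω + W k ω)
    (hWsum : ∀ᵐ ω ∂μ, Summable fun k => W k ω) :
    ∀ᵐ ω ∂μ, (Summable fun k => Z k ω) ∧
      ∃ y : ℝ, 0 ≤ y ∧ Tendsto (fun k => Y k ω) atTop (nhds y) := by
  have hall : ∀ᵐ ω ∂μ, ∀ a : ℕ, (∀ k, psum W (k + 1) ω ≤ (a : ℝ)) →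
      (Summable fun k => Z k ω) ∧
        ∃ y : ℝ, 0 ≤ y ∧ Tendsto (fun k => Y k ω) atTop (nhds y) :=
    ae_all_iff.2 fun a : ℕ => ae_good (a := (a : ℝ)) (Nat.cast_nonneg a) hY hZ hW
      hYint hZint hWint hY0 hZ0 hW0 hcond hWsum
  filter_upwards [hall, hWsum] with ω hω hsum
  obtain ⟨n, hn⟩ := exists_nat_ge (∑' k, W k ω)
  refine hω n fun k => ?_
  calc psum W (k + 1) ω ≤ ∑' j, W j ω :=
        Summable.sum_le_tsum _ (fun i _ => hW0 i ω) hsum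
    _ ≤ n := hn

end Core

end RS

/-- Supermartingale convergence theorem (Robbins–Siegmund). -/
theorem stmt16 {Ω : Type*} {m0 : MeasurableSpace Ω} (μ : Measure Ω)
    [IsProbabilityMeasure μ] (ℱ : Filtration ℕ m0)
    (Y Z W : ℕ → Ω → ℝ)
    (hYadp : Adapted ℱ Y) (hZadp : Adapted ℱ Z) (hWadp : Adapted ℱ W)
    (hYint : ∀ k, Integrable (Y k) μ) (hZint : ∀ k, Integrable (Z k) μ)
    (hWint : ∀ k, Integrable (W k) μ)
    (hY0 : ∀ k, 0 ≤ᵐ[μ] Y k) (hZ0 : ∀ k, 0 ≤ᵐ[μ] Z k) (hW0 : ∀ k, 0 ≤ᵐ[μ] W k)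
    (hcond : ∀ k, μ[Y (k + 1) | ℱ k] ≤ᵐ[μ] fun ω => Y k ω - Z k ω + W k ω)
    (hWsum : ∀ᵐ ω ∂μ, Summable fun k => W k ω) :
    ∀ᵐ ω ∂μ, (Summable fun k => Z k ω) ∧
      ∃ y : ℝ, 0 ≤ y ∧ Tendsto (fun k => Y k ω) atTop (nhds y) := by
  set Y' : ℕ → Ω → ℝ := fun k ω => max (Y k ω) 0 with hY'def
  set Z' : ℕ → Ω → ℝ := fun k ω => max (Z k ω) 0 with hZ'def
  set W' : ℕ → Ω → ℝ := fun k ω => max (W k ω) 0 with hW'def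
  have hYae : ∀ k, Y' k =ᵐ[μ] Y k := fun k => (hY0 k).mono fun ω h => max_eq_left h
  have hZae : ∀ k, Z' k =ᵐ[μ] Z k := fun k => (hZ0 k).mono fun ω h => max_eq_left h
  have hWae : ∀ k, W' k =ᵐ[μ] W k := fun k => (hW0 k).mono fun ω h => max_eq_left h
  have hY'adp : Adapted ℱ Y' := fun k =>
    ((hYadp k).max measurable_const)
  have hZ'adp : Adapted ℱ Z' := fun k =>
    ((hZadp k).max measurable_const)
  have hW'adp : Adapted ℱ W' := fun k =>
    ((hWadp k).max measurable_const)
  have hY'int : ∀ k, Integrable (Y' k) μ := fun k => (hYint k).pos_part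
  have hZ'int : ∀ k, Integrable (Z' k) μ := fun k => (hZint k).pos_part
  have hW'int : ∀ k, Integrable (W' k) μ := fun k => (hWint k).pos_part
  have hcond' : ∀ k, μ[Y' (k + 1) | ℱ k] ≤ᵐ[μ] fun ω => Y' k ω - Z' k ω + W' k ω := by
    intro k
    filter_upwards [condExp_congr_ae (μ := μ) (m := ℱ k) (hYae (k + 1)), hcond k,
      hY0 k, hZ0 k, hW0 k] with ω h1 h2 h3 h4 h5
    have e1 : Y' k ω = Y k ω := max_eq_left h3
    have e2 : Z' k ω = Z k ω := max_eq_left h4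
    have e3 : W' k ω = W k ω := max_eq_left h5
    rw [h1, e1, e2, e3]
    exact h2
  have hWsum' : ∀ᵐ ω ∂μ, Summable fun k => W' k ω := by
    filter_upwards [hWsum, ae_all_iff.2 hWae] with ω h1 h2
    exact h1.congr fun k => (h2 k).symm
  have hmain := RS.core hY'adp hZ'adp hW'adp hY'int hZ'int hW'int
    (fun j ω => le_max_right _ _) (fun j ω => le_max_right _ _) (fun j ω => le_max_right _ _)
    hcond' hWsum'
  filter_upwards [hmain, ae_all_iff.2 hZae, ae_all_iff.2 hYae] with ω hm hZeq hYeq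
  refine ⟨hm.1.congr fun k => hZeq k, ?_⟩
  obtain ⟨y, hy0, hyt⟩ := hm.2
  exact ⟨y, hy0, hyt.congr fun k => hYeq k⟩
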